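/- Let k ≥ 1 and consider a k×k single-channel convolution with (k−1) zeros of padding on the top and left only, applied to an H×W image. The resulting linear endomorphism of ℝ^{H·W} (row-major pixel order) is lower triangular with all diagonal entries equal to K_{k,k}, and hence is invertible if and only if K_{k,k} ≠ 0. -/

import Mathlib

/-- Matrix of the k×k convolution applied to an H×W single-channel image padded
with (k-1) zeros on top and on the left only, in row-major pixel ordering. -/
def convMatrixK (k H W : ℕ) (K : Fin k → Fin k → ℝ) :
    Matrix (Fin H × Fin W) (Fin H × Fin W) ℝ := fun p q =>
  ∑ l : Fin k, ∑ h : Fin k,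
    if (p.1 : ℕ) + (l : ℕ) + 1 = (q.1 : ℕ) + k ∧ (p.2 : ℕ) + (h : ℕ) + 1 = (q.2 : ℕ) + k
    then K l h else 0

/-- For any k ≥ 1, the top-left (k−1)-padded k×k convolution matrix is lower
triangular with all diagonal entries equal to K_{k,k}; hence it is invertible
iff K_{k,k} ≠ 0. -/
theorem stmt_4 (k H W : ℕ) (hk : 0 < k) (hH : 0 < H) (hW : 0 < W)
    (K : Fin k → Fin k → ℝ) :
    (∀ p q : Fin H × Fin W,
      (p.1 : ℕ) * W + (p.2 : ℕ) < (q.1 : ℕ) * W + (q.2 : ℕ) → convMatrixK k H W K p q = 0) ∧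
    (∀ p : Fin H × Fin W,
      convMatrixK k H W K p p = K ⟨k - 1, by omega⟩ ⟨k - 1, by omega⟩) ∧
    (IsUnit (convMatrixK k H W K) ↔ K ⟨k - 1, by omega⟩ ⟨k - 1, by omega⟩ ≠ 0) := by
  set a : Fin k := ⟨k - 1, by omega⟩ with ha
  have h1 : ∀ p q : Fin H × Fin W,
      (p.1 : ℕ) * W + (p.2 : ℕ) < (q.1 : ℕ) * W + (q.2 : ℕ) → convMatrixK k H W K p q = 0 := by
    intro p q hpq
    unfold convMatrixK
    apply Finset.sum_eq_zero; intro l _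
    apply Finset.sum_eq_zero; intro h _
    rw [if_neg]
    rintro ⟨e1, e2⟩
    have hl := l.2
    have hh := h.2
    have hq2 := q.2.2
    have hp2 := p.2.2
    have hq1 : (q.1 : ℕ) ≤ p.1 := by omega
    have := Nat.mul_le_mul_right W hq1
    omega
  have h2 : ∀ p : Fin H × Fin W, convMatrixK k H W K p p = K a a := by
    intro p
    unfold convMatrixK
    have : ∀ l h : Fin k,
        (((p.1 : ℕ) + (l : ℕ) + 1 = (p.1 : ℕ) + k ∧ (p.2 : ℕ) + (h : ℕ) + 1 = (p.2 : ℕ) + k))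
        ↔ (l = a ∧ h = a) := by
      intro l h
      have hl := l.2
      have hh := h.2
      simp [Fin.ext_iff, ha]
      omega
    calc (∑ l : Fin k, ∑ h : Fin k,
        if (p.1 : ℕ) + (l : ℕ) + 1 = (p.1 : ℕ) + k ∧ (p.2 : ℕ) + (h : ℕ) + 1 = (p.2 : ℕ) + k
        then K l h else 0)
        = ∑ l : Fin k, ∑ h : Fin k, if l = a ∧ h = a then K l h else 0 := by
          apply Finset.sum_congr rfl; intro l _
          apply Finset.sum_congr rfl; intro h _
          exact if_congr (this l h) rfl rfl
      _ = K a a := by simp [ite_and, Finset.sum_ite_eq']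
  refine ⟨h1, h2, ?_⟩
  have hcard : 0 < H * W := Nat.mul_pos hH hW
  have hdet : (convMatrixK k H W K).det = (K a a) ^ (H * W) := by
    rw [← Matrix.det_submatrix_equiv_self (finProdFinEquiv (m := H) (n := W)).symm]
    rw [Matrix.det_of_lowerTriangular]
    · simp only [Matrix.submatrix_apply]
      rw [Finset.prod_congr rfl (fun i _ => h2 (finProdFinEquiv.symm i))]
      simp
    · intro i j hij
      have hij' : (i : ℕ) < (j : ℕ) := hij
      set p := finProdFinEquiv.symm i with hp
      set q := finProdFinEquiv.symm j with hq
      have hi : ((p.2 : ℕ) + W * (p.1 : ℕ)) = (i : ℕ) := by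
        have := congrArg Fin.val (finProdFinEquiv.apply_symm_apply i)
        rw [hp]; simpa using this
      have hj : ((q.2 : ℕ) + W * (q.1 : ℕ)) = (j : ℕ) := by
        have := congrArg Fin.val (finProdFinEquiv.apply_symm_apply j)
        rw [hq]; simpa using this
      apply h1
      have c1 : (p.1 : ℕ) * W = W * (p.1 : ℕ) := Nat.mul_comm _ _
      have c2 : (q.1 : ℕ) * W = W * (q.1 : ℕ) := Nat.mul_comm _ _
      rw [← hp, ← hq] at *
      omega
  rw [Matrix.isUnit_iff_isUnit_det, isUnit_iff_ne_zero, hdet]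
  exact pow_ne_zero_iff hcard.ne'
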